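/- Let f, g : ℝ → ℝ be nonnegative integrable functions that are even (f(-v) = f(v) and g(-v) = g(v) for all v) and monotone non-decreasing on (-∞, 0]. Then the convolution f * g is monotone non-decreasing on (-∞, 0]: for all u, Δu with u < u + Δu ≤ 0, (f * g)(u + Δu) ≥ (f * g)(u). -/

import Mathlib

open MeasureTheory

/-- The convolution of two real functions: `(f * g)(x) = ∫ f(v) · g(x - v) dv`. -/
noncomputable def conv (f g : ℝ → ℝ) : ℝ → ℝ := fun x => ∫ v, f v * g (x - v)

/-- If `f` and `g` are nonnegative integrable even functions that are monotone
non-decreasing on `(-∞, 0]`, then their convolution is monotone non-decreasing on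
`(-∞, 0]`: for all `u`, `Δu` with `u < u + Δu ≤ 0`, `(f * g)(u + Δu) ≥ (f * g)(u)`. -/
theorem conv_monotone_of_even_monotone
    (f g : ℝ → ℝ) (hfi : Integrable f) (hgi : Integrable g)
    (hf0 : ∀ v, 0 ≤ f v) (hg0 : ∀ v, 0 ≤ g v)
    (hfe : ∀ v, f (-v) = f v) (hge : ∀ v, g (-v) = g v)
    (hfm : ∀ ⦃u v : ℝ⦄, u ≤ v → v ≤ 0 → f u ≤ f v)
    (hgm : ∀ ⦃u v : ℝ⦄, u ≤ v → v ≤ 0 → g u ≤ g v) :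
    ∀ u Δu : ℝ, u < u + Δu → u + Δu ≤ 0 → conv f g u ≤ conv f g (u + Δu) := by
  -- `f` and `g` are nonincreasing in `|x|`
  have habs : ∀ a b : ℝ, a ^ 2 ≤ b ^ 2 → |a| ≤ |b| := by
    intro a b h
    nlinarith [sq_abs a, sq_abs b, abs_nonneg a, abs_nonneg b]
  have key : ∀ (h : ℝ → ℝ), (∀ v, h (-v) = h v) →
      (∀ ⦃u v : ℝ⦄, u ≤ v → v ≤ 0 → h u ≤ h v) →
      ∀ a b : ℝ, |a| ≤ |b| → h b ≤ h a := by
    intro h he hm a b hab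
    have h1 : ∀ c : ℝ, h c = h (-|c|) := by
      intro c
      rcases le_or_gt 0 c with hc | hc
      · rw [abs_of_nonneg hc, he]
      · rw [abs_of_neg hc, neg_neg]
    rw [h1 a, h1 b]
    exact hm (neg_le_neg hab) (neg_nonpos.mpr (abs_nonneg a))
  have hfk := key f hfe hfm
  have hgk := key g hge hgm
  -- boundedness
  have hfb : ∀ v : ℝ, f v ≤ f 0 := fun v => hfk 0 v (by simp [abs_nonneg])
  have hgb : ∀ v : ℝ, g v ≤ g 0 := fun v => hgk 0 v (by simp [abs_nonneg])
  -- integrability of the convolution integrand, for every x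
  have hint : ∀ x : ℝ, Integrable (fun v => f v * g (x - v)) := by
    intro x
    have hm : AEStronglyMeasurable (fun v => g (x - v)) volume := by
      have := (hgi.comp_sub_left x).aestronglyMeasurable
      simpa using this
    have : Integrable (fun v => g (x - v) * f v) := by
      refine Integrable.bdd_mul (c := g 0) hfi hm (Filter.Eventually.of_forall fun v => ?_)
      rw [Real.norm_eq_abs, abs_of_nonneg (hg0 _)]
      exact hgb _
    simpa [mul_comm] using this
  intro u Δu h1 h2
  set u' := u + Δu with hu'
  set m := (u + u') / 2 with hm
  set φ : ℝ → ℝ := fun v => f v * (g (u' - v) - g (u - v)) with hφ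
  have hφint : Integrable φ := by
    have := (hint u').sub (hint u)
    simpa [hφ, mul_sub, Pi.sub_def] using this
  have hD : conv f g u' - conv f g u = ∫ v, φ v := by
    rw [conv, conv, ← integral_sub (hint u') (hint u)]
    simp [hφ, mul_sub]
  have hrefl : (∫ v, φ v) = ∫ v, φ (2 * m - v) := by
    rw [integral_sub_left_eq_self φ volume (2 * m)]
  have h2D : (2 : ℝ) * (conv f g u' - conv f g u)
      = ∫ v, (f v - f (2 * m - v)) * (g (u' - v) - g (u - v)) := by
    have hadd : (∫ v, φ v) + (∫ v, φ (2 * m - v))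
        = ∫ v, (φ v + φ (2 * m - v)) := by
      rw [← integral_add hφint (hφint.comp_sub_left (2 * m))]
    have heq : ∀ v : ℝ, φ v + φ (2 * m - v)
        = (f v - f (2 * m - v)) * (g (u' - v) - g (u - v)) := by
      intro v
      have e1 : u' - (2 * m - v) = -(u - v) := by rw [hm]; ring
      have e2 : u - (2 * m - v) = -(u' - v) := by rw [hm]; ring
      simp only [hφ, e1, e2, hge]
      ring
    rw [hD, hrefl] at *
    rw [two_mul, hrefl, hadd]
    exact integral_congr_ae (Filter.Eventually.of_forall heq)
  have hnneg : 0 ≤ ∫ v, (f v - f (2 * m - v)) * (g (u' - v) - g (u - v)) := by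
    refine integral_nonneg fun v => ?_
    simp only [Pi.zero_apply]
    have hm0 : m < 0 := by
      have : m < u' := by rw [hm]; linarith
      linarith
    rcases le_or_gt v m with hv | hv
    · -- both factors nonpositive
      have hgle : g (u' - v) ≤ g (u - v) := by
        refine hgk _ _ (habs _ _ (by nlinarith))
      have hfle : f v ≤ f (2 * m - v) := by
        refine hfk _ _ (habs _ _ (by nlinarith))
      have := mul_nonneg (by linarith : (0:ℝ) ≤ f (2 * m - v) - f v)
        (by linarith : (0:ℝ) ≤ g (u - v) - g (u' - v))
      nlinarith
    · have hgle : g (u - v) ≤ g (u' - v) := by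
        refine hgk _ _ (habs _ _ (by nlinarith))
      have hfle : f (2 * m - v) ≤ f v := by
        refine hfk _ _ (habs _ _ (by nlinarith))
      exact mul_nonneg (by linarith) (by linarith)
  nlinarith [h2D ▸ hnneg]
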